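/- Let ξ, ν : ℝ → ℝ be twice differentiable, h_Y : ℝ → ℝ twice differentiable, h_X : ℝ → ℝ differentiable, and suppose that for all (ỹ, n_X) ∈ ℝ², with x̃ = h_X(ỹ) + n_X and n_Y = ỹ - h_Y(x̃), the function W(ỹ, n_X) = ξ(x̃) + ν(n_Y) has vanishing mixed partial derivative ∂²W/(∂ỹ ∂n_X) = 0. Then at every point where ν''(n_Y)·h_Y'(x̃) ≠ 0: 1/h_X'(ỹ) = (ξ''(x̃) + ν''(n_Y)·(h_Y'(x̃))² - ν'(n_Y)·h_Y''(x̃)) / (ν''(n_Y)·h_Y'(x̃)). -/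

import Mathlib

theorem constraint_on_hX
    (ξ ν hY hX : ℝ → ℝ)
    (hξ : ContDiff ℝ 2 ξ) (hν : ContDiff ℝ 2 ν)
    (hhY : ContDiff ℝ 2 hY) (hhX : Differentiable ℝ hX)
    (hmixed : ∀ y nX : ℝ,
      deriv (fun nX' => deriv
        (fun y' => ξ (hX y' + nX') + ν (y' - hY (hX y' + nX'))) y) nX = 0) :
    ∀ y nX : ℝ,
      deriv (deriv ν) (y - hY (hX y + nX)) * deriv hY (hX y + nX) ≠ 0 →
      1 / deriv hX y =
        (deriv (deriv ξ) (hX y + nX) +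
            deriv (deriv ν) (y - hY (hX y + nX)) * (deriv hY (hX y + nX)) ^ 2 -
            deriv ν (y - hY (hX y + nX)) * deriv (deriv hY) (hX y + nX)) /
          (deriv (deriv ν) (y - hY (hX y + nX)) * deriv hY (hX y + nX)) := by
  have hξd : Differentiable ℝ ξ := hξ.differentiable (by norm_num)
  have hνd : Differentiable ℝ ν := hν.differentiable (by norm_num)
  have hYd : Differentiable ℝ hY := hhY.differentiable (by norm_num)
  have hξ2 : Differentiable ℝ (deriv ξ) :=
    (contDiff_succ_iff_deriv.mp (by exact_mod_cast hξ : ContDiff ℝ (1+1) ξ)).2.2.differentiable (by norm_num)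
  have hν2 : Differentiable ℝ (deriv ν) :=
    (contDiff_succ_iff_deriv.mp (by exact_mod_cast hν : ContDiff ℝ (1+1) ν)).2.2.differentiable (by norm_num)
  have hY2 : Differentiable ℝ (deriv hY) :=
    (contDiff_succ_iff_deriv.mp (by exact_mod_cast hhY : ContDiff ℝ (1+1) hY)).2.2.differentiable (by norm_num)
  intro y nX hne
  -- inner derivative
  have inner : ∀ nX' y' : ℝ,
      deriv (fun y'' => ξ (hX y'' + nX') + ν (y'' - hY (hX y'' + nX'))) y'
        = deriv ξ (hX y' + nX') * deriv hX y'
          + deriv ν (y' - hY (hX y' + nX')) * (1 - deriv hY (hX y' + nX') * deriv hX y') := by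
    intro nX' y'
    have h1 : HasDerivAt (fun y'' => hX y'' + nX') (deriv hX y') y' :=
      ((hhX y').hasDerivAt).add_const _
    have h2 : HasDerivAt (fun y'' => ξ (hX y'' + nX'))
        (deriv ξ (hX y' + nX') * deriv hX y') y' :=
      (hξd _).hasDerivAt.comp y' h1
    have h3 : HasDerivAt (fun y'' => hY (hX y'' + nX'))
        (deriv hY (hX y' + nX') * deriv hX y') y' :=
      (hYd _).hasDerivAt.comp y' h1
    have h4 : HasDerivAt (fun y'' => y'' - hY (hX y'' + nX'))
        (1 - deriv hY (hX y' + nX') * deriv hX y') y' :=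
      (hasDerivAt_id y').sub h3
    have h5 : HasDerivAt (fun y'' => ν (y'' - hY (hX y'' + nX')))
        (deriv ν (y' - hY (hX y' + nX')) * (1 - deriv hY (hX y' + nX') * deriv hX y')) y' :=
      (hνd _).hasDerivAt.comp y' h4
    exact (h2.add h5).deriv
  -- outer derivative
  have houter : deriv (fun nX' => deriv
        (fun y' => ξ (hX y' + nX') + ν (y' - hY (hX y' + nX'))) y) nX
      = deriv (deriv ξ) (hX y + nX) * deriv hX y
        + (deriv (deriv ν) (y - hY (hX y + nX)) * (-(deriv hY (hX y + nX)))
            * (1 - deriv hY (hX y + nX) * deriv hX y)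
          + deriv ν (y - hY (hX y + nX)) * (-(deriv (deriv hY) (hX y + nX) * deriv hX y))) := by
    have hfun : (fun nX' => deriv
        (fun y' => ξ (hX y' + nX') + ν (y' - hY (hX y' + nX'))) y)
        = fun nX' => deriv ξ (hX y + nX') * deriv hX y
            + deriv ν (y - hY (hX y + nX')) * (1 - deriv hY (hX y + nX') * deriv hX y) := by
      funext nX'; exact inner nX' y
    rw [hfun]
    have g1 : HasDerivAt (fun nX' : ℝ => hX y + nX') 1 nX :=
      (hasDerivAt_id nX).const_add _
    have t1 : HasDerivAt (fun nX' => deriv ξ (hX y + nX') * deriv hX y)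
        (deriv (deriv ξ) (hX y + nX) * 1 * deriv hX y) nX :=
      (((hξ2 _).hasDerivAt.comp nX g1)).mul_const _
    have tY : HasDerivAt (fun nX' => hY (hX y + nX'))
        (deriv hY (hX y + nX) * 1) nX := (hYd _).hasDerivAt.comp nX g1
    have t2 : HasDerivAt (fun nX' => y - hY (hX y + nX'))
        (-(deriv hY (hX y + nX) * 1)) nX := tY.const_sub _ |>.congr_deriv (by ring) |>.congr_deriv rfl
    have t3 : HasDerivAt (fun nX' => deriv ν (y - hY (hX y + nX')))
        (deriv (deriv ν) (y - hY (hX y + nX)) * (-(deriv hY (hX y + nX) * 1))) nX :=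
      (hν2 _).hasDerivAt.comp nX t2
    have t4 : HasDerivAt (fun nX' => 1 - deriv hY (hX y + nX') * deriv hX y)
        (-(deriv (deriv hY) (hX y + nX) * 1 * deriv hX y)) nX := by
      have := (((hY2 _).hasDerivAt.comp nX g1)).mul_const (deriv hX y)
      have := this.const_sub 1
      simpa using this
    have t5 := t3.mul t4
    have := (t1.add t5).deriv
    simp only [Pi.add_def, Pi.mul_def] at this
    rw [this]; ring
  have hD := hmixed y nX
  rw [houter] at hD
  set x := hX y + nX
  set n := y - hY x
  set A := deriv (deriv ξ) x + deriv (deriv ν) n * (deriv hY x) ^ 2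
      - deriv ν n * deriv (deriv hY) x with hA
  set B := deriv (deriv ν) n * deriv hY x with hB
  have key : deriv hX y * A = B := by
    rw [hA, hB]; linear_combination hD
  have hXne : deriv hX y ≠ 0 := by
    intro h; rw [h, zero_mul] at key; exact hne key.symm
  have hAne : A ≠ 0 := by
    intro h; rw [h, mul_zero] at key; exact hne key.symm
  rw [div_eq_div_iff hXne hne]
  linear_combination -key
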